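/- arXiv:1104.1681 — 2 statements merged into one kernel-verified Lean document; each statement's English description precedes it below -/
import Mathlib

section
/- Let G be a Polish group with a fixed countable basis {V_n} with V₀ = G, acting continuously on a Polish space X. For every countable ordinal α and every x ∈ X, the set S_α(x) = {z ∈ X : (z,G) ≤_α (x,G)} is a G-invariant Borel set containing x. -/
open Set Topology Pointwise

/-- Hjorth's back-and-forth relation. `HLe Bas α y V x W` corresponds to
`(y,V) ≤_{1+α} (x,W)` of the paper (so `HLe Bas 0` is `≤₁`):
`(y,V) ≤₁ (x,W)` iff `cl(V·y) ⊆ cl(W·x)`;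
`(y,V) ≤_{α+1} (x,W)` iff for every basic open `V' ⊆ V` there is a basic open
`W' ⊆ W` with `(x,W') ≤_α (y,V')`; limit stages are intersections. -/
noncomputable def HLe {G X : Type*} [SMul G X] [TopologicalSpace X] (Bas : Set (Set G)) :
    Ordinal → X → Set G → X → Set G → Prop := fun α =>
  Ordinal.limitRecOn (motive := fun _ => X → Set G → X → Set G → Prop) α
    (fun y V x W => closure ((· • y) '' V) ⊆ closure ((· • x) '' W))
    (fun _ ih => fun y V x W => ∀ V' ∈ Bas, V' ⊆ V → ∃ W' ∈ Bas, W' ⊆ W ∧ ih x W' y V')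
    (fun o _ ih => fun y V x W => ∀ β, ∀ h : β < o, ih β h y V x W)

section Unfold

variable {G X : Type*} [SMul G X] [TopologicalSpace X] {Bas : Set (Set G)}

theorem HLe_zero (Bas : Set (Set G)) (y : X) (A : Set G) (x : X) (W : Set G) :
    HLe Bas 0 y A x W ↔ closure ((· • y) '' A) ⊆ closure ((· • x) '' W) := by
  unfold HLe
  rw [Ordinal.limitRecOn_zero]

theorem HLe_succ (Bas : Set (Set G)) (α : Ordinal) (y x : X) (A W : Set G) :
    HLe Bas (Order.succ α) y A x W ↔
      ∀ V' ∈ Bas, V' ⊆ A → ∃ W' ∈ Bas, W' ⊆ W ∧ HLe Bas α x W' y V' := by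
  unfold HLe
  rw [Ordinal.limitRecOn_succ]

theorem HLe_limit (Bas : Set (Set G)) {α : Ordinal} (hα : Order.IsSuccLimit α) (y x : X) (A W : Set G) :
    HLe Bas α y A x W ↔ ∀ β < α, HLe Bas β y A x W := by
  unfold HLe
  rw [Ordinal.limitRecOn_limit _ _ _ _ hα]

/-- `HLe` is antitone in the left neighborhood and monotone in the right one. -/
theorem hle_mono : ∀ α : Ordinal, ∀ {y x : X} {A A' B B' : Set G},
    A' ⊆ A → B ⊆ B' → HLe Bas α y A x B → HLe Bas α y A' x B' := by
  intro α
  induction α using Ordinal.induction with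
  | h α IH =>
    intro y x A A' B B' hA hB h
    rcases Ordinal.zero_or_succ_or_isSuccLimit α with rfl | ⟨β, rfl⟩ | hlim
    · rw [HLe_zero] at h ⊢
      exact (closure_mono (image_mono hA)).trans
        (h.trans (closure_mono (image_mono hB)))
    · rw [HLe_succ] at h ⊢
      intro V' hV' hV'A
      obtain ⟨W', hW', hW'B, hh⟩ := h V' hV' (hV'A.trans hA)
      exact ⟨W', hW', hW'B.trans hB, hh⟩
    · rw [HLe_limit Bas hlim] at h ⊢
      exact fun β hβ => IH β hβ hA hB (h β hβ)

theorem hle_refl : ∀ α : Ordinal, ∀ (y : X) (W : Set G), HLe Bas α y W y W := by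
  intro α
  induction α using Ordinal.induction with
  | h α IH =>
    intro y W
    rcases Ordinal.zero_or_succ_or_isSuccLimit α with rfl | ⟨β, rfl⟩ | hlim
    · rw [HLe_zero]
    · rw [HLe_succ]
      exact fun V' h1 h2 => ⟨V', h1, h2, IH β (Order.lt_succ β) y V'⟩
    · rw [HLe_limit Bas hlim]
      exact fun β hβ => IH β hβ y W

end Unfold

section Translate

variable {G X : Type*} [Group G] [TopologicalSpace G] [IsTopologicalGroup G]
  [TopologicalSpace X] [MulAction G X] {V : ℕ → Set G}

theorem image_smul_translate (g : G) (y : X) (A : Set G) :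
    (· • (g • y)) '' A = (· • y) '' ((· * g) '' A) := by
  rw [image_image]
  exact image_congr fun h _ => smul_smul h g y

theorem image_mul_cancel (g : G) (A : Set G) : (· * g) '' ((· * g⁻¹) '' A) = A := by
  rw [image_image]
  simp [inv_mul_cancel_right]

theorem image_mul_cancel' (g : G) (A : Set G) : (· * g⁻¹) '' ((· * g) '' A) = A := by
  rw [image_image]
  simp [mul_inv_cancel_right]

theorem exists_basic_sub (hV : TopologicalSpace.IsTopologicalBasis (Set.range V)) (g : G)
    {V' : Set G} (h : V' ∈ Set.range V) :
    ∃ V'' ∈ Set.range V, V'' ⊆ (· * g) '' V' := by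
  rcases V'.eq_empty_or_nonempty with rfl | ⟨a, ha⟩
  · exact ⟨∅, h, by simp⟩
  · have hop : IsOpen ((· * g) '' V') := by
      have := (Homeomorph.mulRight g).isOpen_image.mpr (hV.isOpen h)
      simpa [Homeomorph.mulRight] using this
    obtain ⟨v, hv, _, hsub⟩ := hV.exists_subset_of_mem_open (mem_image_of_mem _ ha) hop
    exact ⟨v, hv, hsub⟩

theorem hle_translate (hV : TopologicalSpace.IsTopologicalBasis (Set.range V)) :
    ∀ α : Ordinal, ∀ (g : G) (y x : X) (A W : Set G),
    (HLe (Set.range V) α (g • y) A x W ↔ HLe (Set.range V) α y ((· * g) '' A) x W) ∧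
    (HLe (Set.range V) α x W (g • y) A ↔ HLe (Set.range V) α x W y ((· * g) '' A)) := by
  intro α
  induction α using Ordinal.induction with
  | h α IH =>
    intro g y x A W
    rcases Ordinal.zero_or_succ_or_isSuccLimit α with rfl | ⟨β, rfl⟩ | hlim
    · constructor
      · rw [HLe_zero, HLe_zero, image_smul_translate g y A]
      · rw [HLe_zero, HLe_zero, image_smul_translate g y A]
    · have IHβ := IH β (Order.lt_succ β)
      constructor
      · rw [HLe_succ, HLe_succ]
        constructor
        · intro h V' hV'Bas hV'sub
          obtain ⟨V'', hV''Bas, hV''sub⟩ := exists_basic_sub hV g⁻¹ hV'Bas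
          have hV''A : V'' ⊆ A := hV''sub.trans (by
            have := image_mono (f := (· * g⁻¹)) hV'sub
            rwa [image_mul_cancel'] at this)
          obtain ⟨W', hW'B, hW'W, h1⟩ := h V'' hV''Bas hV''A
          have h2 := ((IHβ g y x V'' W').2).mp h1
          have h3 : (· * g) '' V'' ⊆ V' := by
            have := image_mono (f := (· * g)) hV''sub
            rwa [image_mul_cancel] at this
          exact ⟨W', hW'B, hW'W, hle_mono β (Set.Subset.refl W') h3 h2⟩
        · intro h V' hV'Bas hV'A
          obtain ⟨V'', hV''Bas, hV''sub⟩ := exists_basic_sub hV g hV'Bas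
          obtain ⟨W', hW'B, hW'W, h1⟩ := h V'' hV''Bas (hV''sub.trans (image_mono hV'A))
          have h2 : HLe (Set.range V) β x W' y ((· * g) '' V') :=
            hle_mono β (Set.Subset.refl W') hV''sub h1
          exact ⟨W', hW'B, hW'W, ((IHβ g y x V' W').2).mpr h2⟩
      · rw [HLe_succ, HLe_succ]
        constructor
        · intro h V' hV'Bas hV'W
          obtain ⟨W', hW'B, hW'A, h1⟩ := h V' hV'Bas hV'W
          have h2 := ((IHβ g y x W' V').1).mp h1
          obtain ⟨W'', hW''B, hW''sub⟩ := exists_basic_sub hV g hW'B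
          exact ⟨W'', hW''B, hW''sub.trans (image_mono hW'A),
            hle_mono β hW''sub (Set.Subset.refl _) h2⟩
        · intro h V' hV'Bas hV'W
          obtain ⟨W', hW'B, hW'sub, h1⟩ := h V' hV'Bas hV'W
          obtain ⟨W'', hW''B, hW''sub⟩ := exists_basic_sub hV g⁻¹ hW'B
          have hA : W'' ⊆ A := hW''sub.trans (by
            have := image_mono (f := (· * g⁻¹)) hW'sub
            rwa [image_mul_cancel'] at this)
          have h3 : (· * g) '' W'' ⊆ W' := by
            have := image_mono (f := (· * g)) hW''sub
            rwa [image_mul_cancel] at this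
          have h2 : HLe (Set.range V) β y ((· * g) '' W'') x V' :=
            hle_mono β h3 (Set.Subset.refl _) h1
          exact ⟨W'', hW''B, hA, ((IHβ g y x W'' V').1).mpr h2⟩
    · constructor
      · rw [HLe_limit _ hlim, HLe_limit _ hlim]
        exact ⟨fun h β hβ => ((IH β hβ g y x A W).1).mp (h β hβ),
          fun h β hβ => ((IH β hβ g y x A W).1).mpr (h β hβ)⟩
      · rw [HLe_limit _ hlim, HLe_limit _ hlim]
        exact ⟨fun h β hβ => ((IH β hβ g y x A W).2).mp (h β hβ),
          fun h β hβ => ((IH β hβ g y x A W).2).mpr (h β hβ)⟩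

theorem image_mul_univ (g : G) : (· * g) '' (Set.univ : Set G) = Set.univ := by
  ext a
  simp only [image_univ, mem_range, mem_univ, iff_true]
  exact ⟨a * g⁻¹, inv_mul_cancel_right a g⟩

end Translate

section Meas

variable {G X : Type*} [Group G] [TopologicalSpace G] [IsTopologicalGroup G] [PolishSpace G]
  [TopologicalSpace X] [PolishSpace X] [MeasurableSpace X] [BorelSpace X]
  [MulAction G X] [ContinuousSMul G X] {V : ℕ → Set G}

/-- In a second countable space, every set has a countable dense-in-itself subset. -/
theorem exists_countable_dense_sub {Y : Type*} [TopologicalSpace Y]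
    [SecondCountableTopology Y] (A : Set Y) :
    ∃ D : Set Y, D.Countable ∧ D ⊆ A ∧ A ⊆ closure D := by
  obtain ⟨s, hsc, hsd⟩ := TopologicalSpace.exists_countable_dense ↥A
  refine ⟨Subtype.val '' s, hsc.image _, Subtype.coe_image_subset _ _, fun a ha => ?_⟩
  have h1 : (⟨a, ha⟩ : ↥A) ∈ closure s := hsd ⟨a, ha⟩
  exact image_closure_subset_closure_image continuous_subtype_val ⟨_, h1, rfl⟩

theorem mem_closure_smul_iff {D A : Set G} (hD : D ⊆ A) (hDd : A ⊆ closure D)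
    (z : X) (c : X) :
    c ∈ closure ((· • z) '' A) ↔
      ∀ U ∈ TopologicalSpace.countableBasis X, c ∈ U → ∃ g ∈ D, g • z ∈ U := by
  constructor
  · intro h U hU hcU
    have hUo : IsOpen U := TopologicalSpace.isOpen_of_mem_countableBasis hU
    obtain ⟨p, hpU, g, hgA, rfl⟩ := mem_closure_iff.mp h U hUo hcU
    -- upgrade g ∈ A to some g' ∈ D using density and continuity
    have hcont : Continuous fun g : G => g • z := continuous_id.smul continuous_const
    have hWo : IsOpen ((· • z) ⁻¹' U) := hUo.preimage hcont
    have hgW : g ∈ (· • z) ⁻¹' U := hpU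
    have hgcl : g ∈ closure D := hDd hgA
    obtain ⟨g', hg'W, hg'D⟩ := mem_closure_iff.mp hgcl _ hWo hgW
    exact ⟨g', hg'D, hg'W⟩
  · intro h
    rw [mem_closure_iff]
    intro o ho hco
    obtain ⟨U, hU, hcU, hUo⟩ :=
      (TopologicalSpace.isBasis_countableBasis X).exists_subset_of_mem_open hco ho
    obtain ⟨g, hgD, hgU⟩ := h U hU hcU
    exact ⟨g • z, hUo hgU, g, hD hgD, rfl⟩

theorem hle_meas (x : X) :
    ∀ α : Ordinal, α.card ≤ Cardinal.aleph0 → ∀ A B : Set G,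
    MeasurableSet {z : X | HLe (Set.range V) α z A x B} ∧
    MeasurableSet {z : X | HLe (Set.range V) α x B z A} := by
  intro α
  induction α using Ordinal.induction with
  | h α IH =>
    intro hc A B
    rcases Ordinal.zero_or_succ_or_isSuccLimit α with rfl | ⟨β, rfl⟩ | hlim
    · -- base case
      obtain ⟨DA, hDAc, hDA, hDAd⟩ := exists_countable_dense_sub A
      set C := closure ((· • x) '' B) with hC
      constructor
      · have heq : {z : X | HLe (Set.range V) 0 z A x B} =
            ⋂ g ∈ DA, (fun z : X => g • z) ⁻¹' C := by
          ext z
          simp only [mem_setOf_eq, HLe_zero, mem_iInter, mem_preimage]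
          constructor
          · intro h g hg
            exact h (subset_closure (mem_image_of_mem _ (hDA hg)))
          · intro h
            refine closure_minimal ?_ isClosed_closure
            rintro _ ⟨g, hgA, rfl⟩
            have : g ∈ closure DA := hDAd hgA
            have himg : (· • z) '' closure DA ⊆ closure ((· • z) '' DA) :=
              image_closure_subset_closure_image (continuous_id.smul continuous_const)
            have h2 : g • z ∈ closure ((· • z) '' DA) := himg ⟨g, this, rfl⟩
            refine closure_minimal ?_ isClosed_closure h2
            rintro _ ⟨g', hg', rfl⟩
            exact h g' hg'
        rw [heq]
        exact MeasurableSet.biInter hDAc fun g _ =>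
          (isClosed_closure.measurableSet).preimage
            (continuous_const.smul continuous_id).measurable
      · obtain ⟨DC, hDCc, hDC, hDCd⟩ := exists_countable_dense_sub C
        have heq : {z : X | HLe (Set.range V) 0 x B z A} =
            ⋂ c ∈ DC, ⋂ U ∈ TopologicalSpace.countableBasis X, ⋂ (_ : c ∈ U),
              ⋃ g ∈ DA, (fun z : X => g • z) ⁻¹' U := by
          ext z
          simp only [mem_setOf_eq, HLe_zero, mem_iInter, mem_iUnion, mem_preimage, exists_prop]
          constructor
          · intro h c hcD U hU hcU
            have hc1 : c ∈ closure ((· • z) '' A) := h (hDC hcD)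
            obtain ⟨g, hg, hgU⟩ := (mem_closure_smul_iff hDA hDAd z c).mp hc1 U hU hcU
            exact ⟨g, hg, hgU⟩
          · intro h
            have hsub : DC ⊆ closure ((· • z) '' A) := fun c hcD =>
              (mem_closure_smul_iff hDA hDAd z c).mpr (fun U hU hcU => h c hcD U hU hcU)
            calc C ⊆ closure DC := hDCd
              _ ⊆ closure (closure ((· • z) '' A)) := closure_mono hsub
              _ = closure ((· • z) '' A) := closure_closure
        rw [heq]
        refine MeasurableSet.biInter hDCc fun c _ => ?_
        refine MeasurableSet.biInter ((TopologicalSpace.countable_countableBasis X)) fun U hU => ?_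
        refine MeasurableSet.iInter fun _ => ?_
        exact MeasurableSet.biUnion hDAc fun g _ =>
          ((TopologicalSpace.isOpen_of_mem_countableBasis hU).measurableSet).preimage
            (continuous_const.smul continuous_id).measurable
    · -- successor case
      have hβc : β.card ≤ Cardinal.aleph0 :=
        (Ordinal.card_le_card (Order.le_succ β)).trans hc
      constructor
      · have heq : {z : X | HLe (Set.range V) (Order.succ β) z A x B} =
            ⋂ (n : ℕ), ⋂ (_ : V n ⊆ A), ⋃ (m : ℕ), ⋃ (_ : V m ⊆ B),
              {z : X | HLe (Set.range V) β x (V m) z (V n)} := by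
          ext z
          simp only [mem_setOf_eq, HLe_succ, mem_iInter, mem_iUnion]
          constructor
          · intro h n hn
            obtain ⟨W', ⟨m, rfl⟩, hWB, hh⟩ := h (V n) ⟨n, rfl⟩ hn
            exact ⟨m, hWB, hh⟩
          · rintro h V' ⟨n, rfl⟩ hn
            obtain ⟨m, hm, hh⟩ := h n hn
            exact ⟨V m, ⟨m, rfl⟩, hm, hh⟩
        rw [heq]
        refine MeasurableSet.iInter fun n => ?_
        refine MeasurableSet.iInter fun _ => ?_
        refine MeasurableSet.iUnion fun m => ?_
        exact MeasurableSet.iUnion fun _ => (IH β (Order.lt_succ β) hβc (V n) (V m)).2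
      · have heq : {z : X | HLe (Set.range V) (Order.succ β) x B z A} =
            ⋂ (n : ℕ), ⋂ (_ : V n ⊆ B), ⋃ (m : ℕ), ⋃ (_ : V m ⊆ A),
              {z : X | HLe (Set.range V) β z (V m) x (V n)} := by
          ext z
          simp only [mem_setOf_eq, HLe_succ, mem_iInter, mem_iUnion]
          constructor
          · intro h n hn
            obtain ⟨W', ⟨m, rfl⟩, hWA, hh⟩ := h (V n) ⟨n, rfl⟩ hn
            exact ⟨m, hWA, hh⟩
          · rintro h V' ⟨n, rfl⟩ hn
            obtain ⟨m, hm, hh⟩ := h n hn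
            exact ⟨V m, ⟨m, rfl⟩, hm, hh⟩
        rw [heq]
        refine MeasurableSet.iInter fun n => ?_
        refine MeasurableSet.iInter fun _ => ?_
        refine MeasurableSet.iUnion fun m => ?_
        exact MeasurableSet.iUnion fun _ => (IH β (Order.lt_succ β) hβc (V m) (V n)).1
    · -- limit case
      have hcnt : (Set.Iio α).Countable := by
        rw [← Cardinal.le_aleph0_iff_set_countable, Ordinal.mk_Iio_ordinal]
        rw [Cardinal.lift_le_aleph0]
        exact hc
      have hIH : ∀ β ∈ Set.Iio α, β.card ≤ Cardinal.aleph0 := fun β hβ =>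
        (Ordinal.card_le_card (le_of_lt hβ)).trans hc
      constructor
      · have heq : {z : X | HLe (Set.range V) α z A x B} =
            ⋂ β ∈ Set.Iio α, {z : X | HLe (Set.range V) β z A x B} := by
          ext z
          simp only [mem_setOf_eq, HLe_limit _ hlim, mem_iInter, mem_Iio]
        rw [heq]
        exact MeasurableSet.biInter hcnt fun β hβ => (IH β hβ (hIH β hβ) A B).1
      · have heq : {z : X | HLe (Set.range V) α x B z A} =
            ⋂ β ∈ Set.Iio α, {z : X | HLe (Set.range V) β x B z A} := by
          ext z
          simp only [mem_setOf_eq, HLe_limit _ hlim, mem_iInter, mem_Iio]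
        rw [heq]
        exact MeasurableSet.biInter hcnt fun β hβ => (IH β hβ (hIH β hβ) A B).2

end Meas

/-- For every countable ordinal `α` and `x ∈ X`, the set
`S_α(x) = {z : (z,G) ≤_{1+α} (x,G)}` is a `G`-invariant Borel set containing `x`. -/
theorem hLe_section_invariant_borel {G X : Type*} [Group G] [TopologicalSpace G]
    [IsTopologicalGroup G] [PolishSpace G] [TopologicalSpace X] [PolishSpace X]
    [MeasurableSpace X] [BorelSpace X] [MulAction G X] [ContinuousSMul G X]
    (V : ℕ → Set G) (hV : TopologicalSpace.IsTopologicalBasis (Set.range V))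
    (hV0 : V 0 = Set.univ) {α : Ordinal} (hαc : α.card ≤ Cardinal.aleph0) (x : X) :
    x ∈ {z : X | HLe (Set.range V) α z (Set.univ : Set G) x (Set.univ : Set G)} ∧
    (∀ g : G, ∀ z ∈ {z : X | HLe (Set.range V) α z (Set.univ : Set G) x (Set.univ : Set G)},
      g • z ∈ {z : X | HLe (Set.range V) α z (Set.univ : Set G) x (Set.univ : Set G)}) ∧
    MeasurableSet {z : X | HLe (Set.range V) α z (Set.univ : Set G) x (Set.univ : Set G)} := by
  refine ⟨hle_refl α x Set.univ, ?_, (hle_meas x α hαc Set.univ Set.univ).1⟩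
  intro g z hz
  have h := (hle_translate hV α g z x Set.univ Set.univ).1
  rw [image_mul_univ] at h
  exact h.mpr hz
end

section
/- Let X be a Polish G-space for a Polish group G. If B ⊆ X is Borel and H ⊆ G is open, then the Vaught transform B^{*H} = {x ∈ X : {g ∈ H : g·x ∈ B} is comeager in H} is Borel. Moreover if B is Π⁰_α with α ≥ 2, then B^{*H} is Π⁰_α. -/
open Set Topology Pointwise

/-- The Vaught `*`-transform: `B^{*H} = {x : {g ∈ H : g • x ∈ B} is comeager in H}`. -/
def VaughtStar {G X : Type*} [SMul G X] [TopologicalSpace G] (B : Set X) (H : Set G) : Set X :=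
  {x | {g : H | (g : G) • x ∈ B} ∈ residual H}

/-- The Borel pointclass `Σ⁰_α`. -/
def SigmaClass (X : Type*) [TopologicalSpace X] (α : Ordinal) : Set (Set X) :=
  if α ≤ 1 then {s | IsOpen s}
  else {s | ∃ f : ℕ → Set X,
    (∀ n, ∃ β, ∃ _ : β < α, (f n)ᶜ ∈ SigmaClass X β) ∧ s = ⋃ n, f n}
termination_by α

/-- The multiplicative Borel pointclass `Π⁰_α`. -/
def PiClass (X : Type*) [TopologicalSpace X] (α : Ordinal) : Set (Set X) :=
  {s | sᶜ ∈ SigmaClass X α}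

section Aux

open Filter TopologicalSpace

variable {G : Type*} [TopologicalSpace G]

lemma isMeagre_union' {s t : Set G} (hs : IsMeagre s) (ht : IsMeagre t) : IsMeagre (s ∪ t) := by
  rw [IsMeagre, compl_union]; exact inter_mem hs ht

lemma IsOpen.eq_empty_of_isMeagre' [BaireSpace G] {s : Set G} (hs : IsOpen s)
    (h : IsMeagre s) : s = ∅ := by
  rcases s.eq_empty_or_nonempty with h' | ⟨x, hx⟩
  · exact h'
  · obtain ⟨y, hy1, hy2⟩ := (dense_of_mem_residual h).inter_open_nonempty s hs ⟨x, hx⟩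
    exact absurd hy1 hy2

lemma isNowhereDense_open_diff {V U : Set G} (hV : IsOpen V) (hU : IsOpen U)
    (hd : V ⊆ closure (V ∩ U)) : IsNowhereDense (V \ U) := by
  rw [IsNowhereDense, eq_empty_iff_forall_notMem]
  intro x hx
  have hxW : x ∈ interior (closure (V \ U)) := hx
  have hxo : x ∈ closure V := closure_mono diff_subset (interior_subset hxW)
  obtain ⟨y, hyW, hyV⟩ := mem_closure_iff.mp hxo _ isOpen_interior hxW
  obtain ⟨z, ⟨hzW, hzV⟩, -, hzU⟩ :=
    mem_closure_iff.mp (hd hyV) _ (isOpen_interior.inter hV) ⟨hyW, hyV⟩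
  obtain ⟨w, ⟨-, hwU⟩, -, hwU'⟩ :=
    mem_closure_iff.mp (interior_subset hzW) _ (isOpen_interior.inter hU) ⟨hzW, hzU⟩
  exact hwU' hwU

/-- For `V` open, a set of the subtype `↥V` given as a preimage of `T` is residual in `↥V`
iff `V \ T` is meagre in the ambient space. -/
lemma mem_residual_subtype_iff {V T : Set G} (hV : IsOpen V) :
    (Subtype.val ⁻¹' T : Set ↥V) ∈ residual ↥V ↔ IsMeagre (V \ T) := by
  constructor
  · intro h
    obtain ⟨S, hSo, hSd, hSc, hSsub⟩ := mem_residual_iff.mp h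
    have hex : ∀ t ∈ S, ∃ U : Set G, IsOpen U ∧ Subtype.val ⁻¹' U = t := by
      intro t ht
      obtain ⟨U, hU, hUt⟩ := isOpen_induced_iff.mp (hSo t ht)
      exact ⟨U, hU, hUt⟩
    choose! U hUo hUt using hex
    rw [isMeagre_iff_countable_union_isNowhereDense]
    refine ⟨(fun t => V \ U t) '' S, ?_, hSc.image _, ?_⟩
    · rintro - ⟨t, ht, rfl⟩
      refine isNowhereDense_open_diff hV (hUo t ht) ?_
      intro x hxV
      rw [mem_closure_iff]
      intro o ho hxo
      have hp : (⟨x, hxV⟩ : ↥V) ∈ closure (Subtype.val ⁻¹' (U t)) := by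
        rw [hUt t ht]; exact hSd t ht _
      obtain ⟨z, hzo, hzU⟩ := mem_closure_iff.mp hp (Subtype.val ⁻¹' o)
        (ho.preimage continuous_subtype_val) hxo
      exact ⟨(z : G), hzo, z.2, hzU⟩
    · intro x hx
      have h1 : (⟨x, hx.1⟩ : ↥V) ∉ Subtype.val ⁻¹' T := hx.2
      have h2 : (⟨x, hx.1⟩ : ↥V) ∉ ⋂₀ S := fun hc => h1 (hSsub hc)
      rw [mem_sInter] at h2
      push_neg at h2
      obtain ⟨t, htS', hxt'⟩ := h2
      refine mem_sUnion.mpr ⟨V \ U t, ⟨t, htS', rfl⟩, hx.1, fun hxU => hxt' ?_⟩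
      rw [← hUt t htS']; exact hxU
  · intro h
    have := tendsto_residual_of_isOpenMap continuous_subtype_val hV.isOpenMap_subtype_val h
    refine mem_of_superset this ?_
    rintro ⟨z, hzV⟩ hz
    simp only [mem_preimage, mem_compl_iff, mem_diff, not_and, not_not] at hz
    exact hz hzV

/-- The nonempty basic open subsets of `V`. -/
def goodBasis [SecondCountableTopology G] (V : Set G) : Set (Set G) :=
  {W | W ∈ countableBasis G ∧ W.Nonempty ∧ W ⊆ V}

lemma goodBasis_countable [SecondCountableTopology G] (V : Set G) :
    (goodBasis V).Countable :=
  (countable_countableBasis G).mono fun _ hW => hW.1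

lemma goodBasis_isOpen [SecondCountableTopology G] {V W : Set G} (h : W ∈ goodBasis V) :
    IsOpen W := isOpen_of_mem_countableBasis h.1

/-- Localization of nonmeagerness for Baire measurable sets. -/
lemma meagre_inter_iff [BaireSpace G] [SecondCountableTopology G] {S V : Set G}
    (hS : BaireMeasurableSet S) (hV : IsOpen V) :
    IsMeagre (V ∩ S) ↔ ∀ W ∈ goodBasis V, ¬ IsMeagre (W \ S) := by
  constructor
  · rintro h W ⟨hWb, hWne, hWV⟩ hm
    have hsub : W ⊆ (W \ S) ∪ (V ∩ S) := fun x hx => by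
      by_cases hxS : x ∈ S
      · exact Or.inr ⟨hWV hx, hxS⟩
      · exact Or.inl ⟨hx, hxS⟩
    have hWm : IsMeagre W := ((isMeagre_union' hm h).mono hsub)
    rw [(isOpen_of_mem_countableBasis hWb).eq_empty_of_isMeagre' hWm] at hWne
    exact hWne.ne_empty rfl
  · intro h
    by_contra hm
    have hVS : BaireMeasurableSet (V ∩ S) := hV.baireMeasurableSet.inter hS
    obtain ⟨u, hu, hequ⟩ := hVS.residualEq_isOpen
    have hm1 : IsMeagre ((V ∩ S) \ u) := by
      rw [IsMeagre]
      refine mem_of_superset hequ fun x hx => ?_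
      simp only [mem_setOf_eq, eq_iff_iff] at hx
      simp only [mem_compl_iff, mem_diff, not_and, not_not]
      intro hxVS; exact hx.mp hxVS
    have hm2 : IsMeagre (u \ (V ∩ S)) := by
      rw [IsMeagre]
      refine mem_of_superset hequ fun x hx => ?_
      simp only [mem_setOf_eq, eq_iff_iff] at hx
      simp only [mem_compl_iff, mem_diff, not_and, not_not]
      intro hxu; exact hx.mpr hxu
    have hne : (u ∩ V).Nonempty := by
      rcases (u ∩ V).eq_empty_or_nonempty with he | hne
      · exfalso
        apply hm
        refine hm1.mono (t := V ∩ S) fun x hx => mem_diff_of_mem hx fun hxu => ?_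
        exact (eq_empty_iff_forall_notMem.mp he x) ⟨hxu, hx.1⟩
      · exact hne
    obtain ⟨x, hx⟩ := hne
    obtain ⟨W, hWb, hxW, hWu⟩ :=
      (isBasis_countableBasis G).exists_subset_of_mem_open hx (hu.inter hV)
    refine h W ⟨hWb, ⟨x, hxW⟩, hWu.trans inter_subset_right⟩ (hm2.mono ?_)
    intro z hz
    have hzu : z ∈ u ∩ V := hWu hz.1
    exact ⟨hzu.1, fun hzVS => hz.2 hzVS.2⟩

section SMul

variable {X : Type*} [SMul G X]

lemma vaughtStar_empty (B : Set X) : VaughtStar B (∅ : Set G) = univ := by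
  refine eq_univ_of_forall fun x => ?_
  show {g : ↥(∅ : Set G) | (g : G) • x ∈ B} ∈ residual ↥(∅ : Set G)
  have : {g : ↥(∅ : Set G) | (g : G) • x ∈ B} = univ :=
    eq_univ_of_forall fun g => absurd g.2 (notMem_empty _)
  rw [this]; exact univ_mem

lemma mem_vaughtStar_iff {B : Set X} {V : Set G} (hV : IsOpen V) {x : X} :
    x ∈ VaughtStar B V ↔ IsMeagre (V \ (fun g : G => g • x) ⁻¹' B) := by
  rw [← mem_residual_subtype_iff (T := (fun g : G => g • x) ⁻¹' B) hV]
  rfl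

lemma vaughtStar_iInter {V : Set G} (hV : IsOpen V) (f : ℕ → Set X) :
    VaughtStar (⋂ n, f n) V = ⋂ n, VaughtStar (f n) V := by
  ext x
  simp only [mem_iInter, mem_vaughtStar_iff hV]
  have heq : V \ (fun g : G => g • x) ⁻¹' (⋂ n, f n)
      = ⋃ n, V \ (fun g : G => g • x) ⁻¹' (f n) := by
    rw [preimage_iInter, diff_iInter]
  rw [heq]
  exact ⟨fun h n => h.mono (subset_iUnion (fun n => V \ (fun g : G => g • x) ⁻¹' (f n)) n), fun h => isMeagre_iUnion h⟩

variable [TopologicalSpace X] [ContinuousSMul G X]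

lemma vaughtStar_closed [BaireSpace G] {B : Set X} (hB : IsClosed B) {V : Set G}
    (hV : IsOpen V) :
    VaughtStar B V = ⋂ g ∈ V, (fun y : X => g • y) ⁻¹' B := by
  ext x
  rw [mem_vaughtStar_iff hV]
  simp only [mem_iInter, mem_preimage]
  have hcont : Continuous fun g : G => g • x := continuous_id.smul continuous_const
  have hopen : IsOpen (V \ (fun g : G => g • x) ⁻¹' B) := hV.sdiff (hB.preimage hcont)
  constructor
  · intro h g hg
    by_contra hgB
    have : g ∈ V \ (fun g : G => g • x) ⁻¹' B := ⟨hg, hgB⟩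
    rw [hopen.eq_empty_of_isMeagre' h] at this
    exact this
  · intro h
    have : V \ (fun g : G => g • x) ⁻¹' B = ∅ :=
      eq_empty_iff_forall_notMem.mpr fun g hg => hg.2 (h g hg.1)
    rw [this]; exact IsMeagre.empty

lemma vaughtStar_closed_isClosed [BaireSpace G] {B : Set X} (hB : IsClosed B) {V : Set G}
    (hV : IsOpen V) : IsClosed (VaughtStar B V) := by
  rw [vaughtStar_closed hB hV]
  exact isClosed_biInter fun g _ => hB.preimage (continuous_const.smul continuous_id)

variable [MeasurableSpace G] [BorelSpace G] [MeasurableSpace X] [BorelSpace X]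
  [BaireSpace G] [SecondCountableTopology G]

/-- The key complement identity for the Vaught transform. -/
lemma vaughtStar_compl_eq {B : Set X} (hB : MeasurableSet B) {V : Set G} (hV : IsOpen V) :
    VaughtStar Bᶜ V = ⋂ W ∈ goodBasis V, (VaughtStar B W)ᶜ := by
  ext x
  have hcont : Continuous fun g : G => g • x := continuous_id.smul continuous_const
  have hbm : BaireMeasurableSet ((fun g : G => g • x) ⁻¹' B) :=
    (hcont.measurable hB).baireMeasurableSet
  rw [mem_vaughtStar_iff hV]
  have heq : V \ (fun g : G => g • x) ⁻¹' Bᶜ = V ∩ (fun g : G => g • x) ⁻¹' B := by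
    rw [preimage_compl, diff_compl]
  rw [heq, meagre_inter_iff hbm hV]
  simp only [mem_iInter, mem_compl_iff]
  refine forall₂_congr fun W hW => ?_
  rw [mem_vaughtStar_iff (goodBasis_isOpen hW)]

end SMul

end Aux

section Sigma

open TopologicalSpace

variable {X : Type*} [TopologicalSpace X]

lemma sigmaClass_measurableSet [MeasurableSpace X] [BorelSpace X] :
    ∀ α : Ordinal, ∀ s : Set X, s ∈ SigmaClass X α → MeasurableSet s := by
  intro α
  induction α using Ordinal.induction with
  | _ α IH =>
    intro s hs
    rw [SigmaClass] at hs
    split_ifs at hs with h1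
    · exact hs.measurableSet
    · obtain ⟨f, hf, rfl⟩ := hs
      refine MeasurableSet.iUnion fun n => ?_
      obtain ⟨β, hβ, hfb⟩ := hf n
      exact (IH β hβ _ hfb).of_compl

lemma isOpen_mem_sigmaClass_one {s : Set X} (hs : IsOpen s) : s ∈ SigmaClass X 1 := by
  rw [SigmaClass, if_pos le_rfl]; exact hs

lemma empty_mem_sigmaClass {α : Ordinal} (hα : 2 ≤ α) : (∅ : Set X) ∈ SigmaClass X α := by
  have h1 : ¬ α ≤ 1 := fun h => absurd (hα.trans h) (not_le.mpr one_lt_two)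
  rw [SigmaClass, if_neg h1]
  exact ⟨fun _ => ∅, fun n => ⟨1, lt_of_lt_of_le one_lt_two hα,
    by rw [compl_empty]; exact isOpen_mem_sigmaClass_one isOpen_univ⟩, (iUnion_empty).symm⟩

end Sigma

section Main

open TopologicalSpace

variable {G X : Type*} [TopologicalSpace G] [SMul G X] [TopologicalSpace X]
  [MeasurableSpace G] [BorelSpace G] [MeasurableSpace X] [BorelSpace X]
  [BaireSpace G] [SecondCountableTopology G] [ContinuousSMul G X]

lemma vaughtStar_pi_aux :
    ∀ α : Ordinal, 2 ≤ α → ∀ B : Set X, Bᶜ ∈ SigmaClass X α →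
      ∀ V : Set G, IsOpen V → (VaughtStar B V)ᶜ ∈ SigmaClass X α := by
  intro α
  induction α using Ordinal.induction with
  | _ α IH =>
    intro hα B hB V hV
    have h1 : ¬ α ≤ 1 := fun h => absurd (hα.trans h) (not_le.mpr one_lt_two)
    rcases V.eq_empty_or_nonempty with rfl | ⟨v, hv⟩
    · rw [vaughtStar_empty, compl_univ]
      exact empty_mem_sigmaClass hα
    · rw [SigmaClass, if_neg h1] at hB
      obtain ⟨f, hf, hBc⟩ := hB
      have hfm : ∀ n, MeasurableSet (f n) := fun n => by
        obtain ⟨β, _, h⟩ := hf n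
        exact (sigmaClass_measurableSet β _ h).of_compl
      have hBeq : B = ⋂ n, (f n)ᶜ := by
        rw [← compl_iUnion, ← hBc, compl_compl]
      obtain ⟨W0, hW0b, hvW0, hW0V⟩ :=
        (isBasis_countableBasis G).exists_subset_of_mem_open hv hV
      obtain ⟨e, he⟩ := (goodBasis_countable V).exists_eq_range
        ⟨W0, hW0b, ⟨v, hvW0⟩, hW0V⟩
      have hem : ∀ m, e m ∈ goodBasis V := fun m => by
        rw [he]; exact mem_range_self m
      have hkey : VaughtStar B V = ⋂ n, ⋂ m, (VaughtStar (f n) (e m))ᶜ := by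
        rw [hBeq, vaughtStar_iInter hV]
        refine iInter_congr fun n => ?_
        rw [vaughtStar_compl_eq (hfm n) hV, he, biInter_range]
      have hcompl : (VaughtStar B V)ᶜ
          = ⋃ k : ℕ, VaughtStar (f k.unpair.1) (e k.unpair.2) := by
        rw [hkey]
        simp only [compl_iInter, compl_compl]
        exact (Set.iUnion_unpair fun n m => VaughtStar (f n) (e m)).symm
      rw [hcompl, SigmaClass, if_neg h1]
      refine ⟨fun k => VaughtStar (f k.unpair.1) (e k.unpair.2), fun k => ?_, rfl⟩
      obtain ⟨β, hβα, hfβ⟩ := hf k.unpair.1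
      have heo : IsOpen (e k.unpair.2) := goodBasis_isOpen (hem k.unpair.2)
      by_cases hβ1 : β ≤ 1
      · have hfo : IsOpen (f k.unpair.1)ᶜ := by
          rw [SigmaClass, if_pos hβ1] at hfβ; exact hfβ
        have hcl : IsClosed (VaughtStar (f k.unpair.1) (e k.unpair.2)) :=
          vaughtStar_closed_isClosed (isOpen_compl_iff.mp hfo) heo
        exact ⟨1, lt_of_lt_of_le one_lt_two hα,
          isOpen_mem_sigmaClass_one hcl.isOpen_compl⟩
      · have h2β : 2 ≤ β := by
          have hlt : (1 : Ordinal) < β := lt_of_not_ge hβ1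
          have := Order.succ_le_of_lt hlt
          rwa [← Ordinal.add_one_eq_succ, one_add_one_eq_two] at this
        exact ⟨β, hβα, IH β hβα h2β (f k.unpair.1) hfβ (e k.unpair.2) heo⟩

lemma vaughtStar_measurable :
    ∀ B : Set X, MeasurableSet B → ∀ V : Set G, IsOpen V →
      MeasurableSet (VaughtStar B V) := by
  intro B hB
  refine MeasurableSet.induction_on_open
    (C := fun s _ => ∀ V : Set G, IsOpen V → MeasurableSet (VaughtStar s V)) ?_ ?_ ?_ B hB
  · intro U hU V hV
    have h := vaughtStar_compl_eq (B := Uᶜ) hU.measurableSet.compl hV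
    rw [compl_compl] at h
    rw [h]
    refine MeasurableSet.biInter (goodBasis_countable V) fun W hW => ?_
    exact ((vaughtStar_closed_isClosed hU.isClosed_compl
      (goodBasis_isOpen hW)).measurableSet).compl
  · intro t ht IH V hV
    rw [vaughtStar_compl_eq ht hV]
    exact MeasurableSet.biInter (goodBasis_countable V) fun W hW =>
      (IH W (goodBasis_isOpen hW)).compl
  · intro f _ hfm IH V hV
    have h := vaughtStar_compl_eq (B := ⋂ i, (f i)ᶜ)
      (MeasurableSet.iInter fun i => (hfm i).compl) hV
    rw [compl_iInter] at h
    simp only [compl_compl] at h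
    rw [h]
    refine MeasurableSet.biInter (goodBasis_countable V) fun W hW => MeasurableSet.compl ?_
    rw [vaughtStar_iInter (goodBasis_isOpen hW)]
    refine MeasurableSet.iInter fun n => ?_
    rw [vaughtStar_compl_eq (hfm n) (goodBasis_isOpen hW)]
    exact MeasurableSet.biInter (goodBasis_countable W) fun U hU =>
      (IH n U (goodBasis_isOpen hU)).compl

end Main

/-- The Vaught transform of a Borel set is Borel; moreover the Vaught transform
of a `Π⁰_α` set with `α ≥ 2` is again `Π⁰_α`. -/
theorem vaughtStar_borel_and_pi {G X : Type*} [Group G] [TopologicalSpace G]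
    [IsTopologicalGroup G] [PolishSpace G] [TopologicalSpace X] [PolishSpace X]
    [MeasurableSpace X] [BorelSpace X] [MulAction G X] [ContinuousSMul G X]
    (B : Set X) (H : Set G) (hH : IsOpen H) :
    (MeasurableSet B → MeasurableSet (VaughtStar B H)) ∧
    (∀ α : Ordinal, 2 ≤ α → B ∈ PiClass X α → VaughtStar B H ∈ PiClass X α) := by
  letI := TopologicalSpace.upgradeIsCompletelyMetrizable G
  borelize G
  constructor
  · intro hB
    exact vaughtStar_measurable B hB H hH
  · intro α hα hB
    exact vaughtStar_pi_aux α hα B hB H hH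
end
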